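/- Let t_1,...,t_n be distinct nonzero complex numbers and a_1,...,a_n each equal to 1 or 2, with I(1) = {i : a_i = 1} and I(2) = {i : a_i = 2}. Then for any s distinct from all t_i: product over i of (t_i/(s - t_i))^{a_i} equals [sum over i in I(1) of (product over j≠i of (t_j/(t_i - t_j))^{a_j}) · t_i/(s - t_i)] plus [sum over i in I(2) of (product over j≠i of (t_j/(t_i - t_j))^{a_j}) · (s·t_i/(s - t_i)^2 + (sum over j≠i of a_j·t_i/(t_j - t_i) − 1) · t_i/(s - t_i))]. -/

import Mathlib

open Finset Polynomial

lemma derivative_finprod {ι : Type*} [DecidableEq ι] (s : Finset ι) (f : ι → Polynomial ℂ) :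
    Polynomial.derivative (∏ i ∈ s, f i) =
      ∑ i ∈ s, (∏ j ∈ s.erase i, f j) * Polynomial.derivative (f i) := by
  induction s using Finset.induction_on with
  | empty => simp
  | insert x s hx ih =>
    rw [Finset.prod_insert hx, derivative_mul, ih, Finset.sum_insert hx,
      Finset.erase_insert hx, Finset.mul_sum]
    congr 1
    · ring
    · apply Finset.sum_congr rfl
      intro i hi
      rw [Finset.erase_insert_of_ne (by rintro rfl; exact hx hi),
        Finset.prod_insert (by rintro h; exact hx (Finset.mem_of_mem_erase h))]
      ring

theorem prod_pow_decomposition' (n : ℕ) (hn : 0 < n) (t : Fin n → ℂ) (s : ℂ)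
    (a : Fin n → ℕ) (ha : ∀ i, a i = 1 ∨ a i = 2)
    (ht : ∀ i, t i ≠ 0) (hs : s ≠ 0) (hinj : Function.Injective t)
    (hst : ∀ i, s ≠ t i) :
    ∏ i, (t i / (s - t i)) ^ a i
      = (∑ i ∈ univ.filter (fun i => a i = 1),
            (∏ j ∈ univ.erase i, (t j / (t i - t j)) ^ a j) * (t i / (s - t i)))
        + ∑ i ∈ univ.filter (fun i => a i = 2),
            (∏ j ∈ univ.erase i, (t j / (t i - t j)) ^ a j) *
              (s * t i / (s - t i) ^ 2
                + ((∑ j ∈ univ.erase i, (a j : ℂ) * t i / (t j - t i)) - 1)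
                    * (t i / (s - t i))) := by
  classical
  have htne : ∀ {i j : Fin n}, i ≠ j → t i - t j ≠ 0 :=
    fun h => sub_ne_zero.mpr (fun he => h (hinj he))
  have hste : ∀ i, s - t i ≠ 0 := fun i => sub_ne_zero.mpr (hst i)
  have ha1 : ∀ i, 1 ≤ a i := fun i => by rcases ha i with h | h <;> omega
  set I1 : Finset (Fin n) := univ.filter (fun i => a i = 1) with hI1
  set I2 : Finset (Fin n) := univ.filter (fun i => a i = 2) with hI2
  set c : Fin n → ℂ := fun i => ∏ j ∈ univ.erase i, (t j / (t i - t j)) ^ a j with hc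
  set σ : Fin n → ℂ := fun i => ∑ j ∈ univ.erase i, (a j : ℂ) * t i / (t j - t i) with hσ
  set E : Fin n → ℂ := fun k => ∏ j ∈ univ.erase k, (t k - t j) ^ a j with hE
  set T : ℂ := ∏ i, t i ^ a i with hT
  set P : Fin n → ℂ[X] := fun i => (X - C (t i)) ^ a i with hP
  set Dp : Fin n → ℂ[X] := fun i => ∏ j ∈ univ.erase i, P j with hDp
  set S1 : ℂ[X] := ∑ i ∈ I1, C (c i * t i) * Dp i with hS1
  set S2 : ℂ[X] := ∑ i ∈ I2, C (c i * t i) *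
      ((X + C (σ i - 1) * (X - C (t i))) * Dp i) with hS2
  set G : ℂ[X] := C T - S1 - S2 with hG
  -- basic algebraic facts
  have hcE : ∀ k, c k * E k = ∏ j ∈ univ.erase k, t j ^ a j := by
    intro k
    rw [hc, hE, ← Finset.prod_mul_distrib]
    refine Finset.prod_congr rfl fun j hj => ?_
    have hkj : t k - t j ≠ 0 := htne (Finset.ne_of_mem_erase hj).symm
    rw [div_pow, div_mul_cancel₀ _ (pow_ne_zero _ hkj)]
  have hTk : ∀ k, T = t k ^ a k * ∏ j ∈ univ.erase k, t j ^ a j := by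
    intro k
    rw [hT, ← Finset.mul_prod_erase _ _ (Finset.mem_univ k)]
  -- evaluations of Dp
  have hDpself : ∀ k, eval (t k) (Dp k) = E k := by
    intro k; simp [hDp, hP, hE, eval_prod]
  have hDp0 : ∀ i k, k ≠ i → eval (t k) (Dp i) = 0 := by
    intro i k hki
    rw [hDp, eval_prod]
    refine Finset.prod_eq_zero (Finset.mem_erase.mpr ⟨hki, Finset.mem_univ k⟩) ?_
    simp [hP, zero_pow (by have := ha1 k; omega : a k ≠ 0)]
  -- eval of sums
  have hS1e : ∀ x : ℂ, eval x S1 = ∑ i ∈ I1, c i * t i * eval x (Dp i) := by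
    intro x; rw [hS1, eval_finset_sum]; simp
  have hS2e : ∀ x : ℂ, eval x S2 =
      ∑ i ∈ I2, c i * t i * ((x + (σ i - 1) * (x - t i)) * eval x (Dp i)) := by
    intro x; rw [hS2, eval_finset_sum]; simp
  -- G vanishes at every t k
  have hevalG : ∀ k, eval (t k) G = 0 := by
    intro k
    rw [hG, eval_sub, eval_sub, eval_C, hS1e, hS2e]
    rcases ha k with hk | hk
    · have hk1 : k ∈ I1 := by simp [hI1, hk]
      rw [Finset.sum_eq_single_of_mem k hk1 (fun i _ hik => by
          rw [hDp0 i k (Ne.symm hik)]; ring),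
        Finset.sum_eq_zero (fun i hi => by
          have hik : k ≠ i := by
            rintro rfl
            rw [hI2, Finset.mem_filter] at hi
            omega
          rw [hDp0 i k hik]; ring)]
      rw [hDpself k, hTk k, hk, pow_one, ← hcE k]
      ring
    · have hk2 : k ∈ I2 := by simp [hI2, hk]
      rw [Finset.sum_eq_zero (fun i hi => by
          have hik : k ≠ i := by
            rintro rfl
            rw [hI1, Finset.mem_filter] at hi
            omega
          rw [hDp0 i k hik]; ring),
        Finset.sum_eq_single_of_mem k hk2 (fun i _ hik => by
          rw [hDp0 i k (Ne.symm hik)]; ring)]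
      rw [hDpself k, hTk k, hk, ← hcE k]
      ring
  -- derivatives
  have hdS1 : derivative S1 = ∑ i ∈ I1, C (c i * t i) * derivative (Dp i) := by
    rw [hS1, derivative_sum]
    exact Finset.sum_congr rfl fun i _ => by rw [derivative_C_mul]
  have hdS2 : derivative S2 = ∑ i ∈ I2, C (c i * t i) *
      ((1 + C (σ i - 1)) * Dp i + (X + C (σ i - 1) * (X - C (t i))) * derivative (Dp i)) := by
    rw [hS2, derivative_sum]
    refine Finset.sum_congr rfl fun i _ => ?_
    rw [derivative_C_mul, derivative_mul]
    have hd : derivative (X + C (σ i - 1) * (X - C (t i))) = 1 + C (σ i - 1) := by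
      simp [derivative_C_mul]
    rw [hd]
  have hdDp0 : ∀ i k, k ≠ i → a k = 2 → eval (t k) (derivative (Dp i)) = 0 := by
    intro i k hki hk2
    have hkmem : k ∈ univ.erase i := Finset.mem_erase.mpr ⟨hki, Finset.mem_univ k⟩
    simp only [hDp]
    rw [show (∏ j ∈ univ.erase i, P j) = P k * ∏ j ∈ (univ.erase i).erase k, P j from
        (Finset.mul_prod_erase _ _ hkmem).symm,
      derivative_mul, eval_add, eval_mul, eval_mul]
    have h1 : eval (t k) (P k) = 0 := by
      simp [hP, zero_pow (by have := ha1 k; omega : a k ≠ 0)]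
    have h2 : eval (t k) (derivative (P k)) = 0 := by
      simp only [hP, hk2]
      rw [derivative_pow]
      simp
    rw [h1, h2]; ring
  have hdDpk : ∀ k, eval (t k) (derivative (Dp k)) =
      ∑ b ∈ univ.erase k, (∏ j ∈ (univ.erase k).erase b, (t k - t j) ^ a j) *
        ((a b : ℂ) * (t k - t b) ^ (a b - 1)) := by
    intro k
    simp only [hDp]
    rw [derivative_finprod, eval_finset_sum]
    refine Finset.sum_congr rfl fun b hb => ?_
    rw [eval_mul, eval_prod]
    congr 1
    · exact Finset.prod_congr rfl fun j _ => by simp [hP]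
    · simp only [hP]
      rw [derivative_pow]
      simp
  have hsum0 : ∀ k, σ k * E k + t k * (∑ b ∈ univ.erase k,
      (∏ j ∈ (univ.erase k).erase b, (t k - t j) ^ a j) *
        ((a b : ℂ) * (t k - t b) ^ (a b - 1))) = 0 := by
    intro k
    simp only [hσ, hE]
    rw [Finset.sum_mul, Finset.mul_sum, ← Finset.sum_add_distrib]
    refine Finset.sum_eq_zero fun b hb => ?_
    have hbk : t b - t k ≠ 0 := htne (Finset.ne_of_mem_erase hb)
    have hkb : t k - t b ≠ 0 := htne (Ne.symm (Finset.ne_of_mem_erase hb))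
    rw [show (∏ j ∈ univ.erase k, (t k - t j) ^ a j)
        = (t k - t b) ^ a b * ∏ j ∈ (univ.erase k).erase b, (t k - t j) ^ a j from
      (Finset.mul_prod_erase _ _ hb).symm]
    obtain ⟨m, hm⟩ : ∃ m, a b = m + 1 := ⟨a b - 1, by have := ha1 b; omega⟩
    rw [hm]
    simp only [Nat.add_sub_cancel]
    rw [pow_succ]
    field_simp
    ring
  have hevalG' : ∀ k, a k = 2 → eval (t k) (derivative G) = 0 := by
    intro k hk
    rw [hG, derivative_sub, derivative_sub, derivative_C, hdS1, hdS2]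
    rw [eval_sub, eval_sub, eval_zero, eval_finset_sum, eval_finset_sum]
    rw [Finset.sum_eq_zero (fun i hi => by
        have hik : k ≠ i := by
          rintro rfl
          rw [hI1, Finset.mem_filter] at hi
          omega
        simp [hdDp0 i k hik hk]),
      Finset.sum_eq_single_of_mem k (by simp [hI2, hk]) (fun i _ hik => by
        simp [hDp0 i k (Ne.symm hik), hdDp0 i k (Ne.symm hik) hk])]
    simp only [eval_mul, eval_add, eval_C, eval_one, eval_X, eval_sub]
    rw [hDpself k, hdDpk k]
    linear_combination (-(c k * t k)) * hsum0 k
  -- divisibility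
  have hdvd : ∀ k, P k ∣ G := by
    intro k
    rcases ha k with hk | hk
    · simp only [hP, hk, pow_one]
      exact dvd_iff_isRoot.mpr (hevalG k)
    · obtain ⟨q, hq⟩ := dvd_iff_isRoot.mpr (hevalG k)
      have hq' : eval (t k) q = 0 := by
        have hd := congrArg derivative hq
        rw [derivative_mul] at hd
        have h2 := congrArg (eval (t k)) hd
        simp only [eval_add, eval_mul, derivative_sub, derivative_X, derivative_C, sub_zero,
          eval_one, one_mul, eval_sub, eval_X, eval_C, sub_self, zero_mul, add_zero] at h2
        rw [hevalG' k hk] at h2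
        exact h2.symm
      obtain ⟨r, hr⟩ := dvd_iff_isRoot.mpr hq'
      refine ⟨r, ?_⟩
      simp only [hP, hk]
      rw [hq, hr]
      ring
  have hdvdD : (∏ i, P i) ∣ G := by
    apply Finset.prod_dvd_of_coprime
    · intro i _ j hj hij
      simp only [hP]
      exact ((Polynomial.pairwise_coprime_X_sub_C hinj) hij).pow
    · exact fun k _ => hdvd k
  -- degree bounds
  have hNdef : ∀ i : Fin n, a i + ∑ j ∈ univ.erase i, a j = ∑ j, a j :=
    fun i => Finset.add_sum_erase _ _ (Finset.mem_univ i)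
  have hdegDp : ∀ i, natDegree (Dp i) ≤ ∑ j ∈ univ.erase i, a j := by
    intro i
    simp only [hDp]
    refine (Polynomial.natDegree_prod_le _ _).trans ?_
    exact le_of_eq (Finset.sum_congr rfl fun j _ => by
      simp [hP, natDegree_pow, natDegree_X_sub_C])
  have hdegG : natDegree G ≤ (∑ j, a j) - 1 := by
    rw [hG]
    refine (natDegree_sub_le _ _).trans (max_le ((natDegree_sub_le _ _).trans (max_le ?_ ?_)) ?_)
    · simp
    · rw [hS1]
      refine Polynomial.natDegree_sum_le_of_forall_le _ _ fun i hi => ?_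
      refine (natDegree_C_mul_le _ _).trans ((hdegDp i).trans ?_)
      have h1 := hNdef i
      have h2 := ha1 i
      omega
    · rw [hS2]
      refine Polynomial.natDegree_sum_le_of_forall_le _ _ fun i hi => ?_
      refine (natDegree_C_mul_le _ _).trans (natDegree_mul_le.trans ?_)
      have hlin : natDegree (X + C (σ i - 1) * (X - C (t i))) ≤ 1 := by
        refine (natDegree_add_le _ _).trans (max_le (by simp) ?_)
        exact (natDegree_C_mul_le _ _).trans (by simp [natDegree_X_sub_C])
      have hai : a i = 2 := by rw [hI2, Finset.mem_filter] at hi; exact hi.2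
      have h1 := hNdef i
      have h3 := hdegDp i
      omega
  have hdegD : natDegree (∏ i, P i) = ∑ j, a j := by
    rw [Polynomial.natDegree_prod]
    · exact Finset.sum_congr rfl fun j _ => by
        simp [hP, natDegree_pow, natDegree_X_sub_C]
    · intro i _
      simp only [hP]
      exact pow_ne_zero _ (X_sub_C_ne_zero _)
  have hG0 : G = 0 := by
    by_contra hne
    have hle := Polynomial.natDegree_le_of_dvd hdvdD hne
    rw [hdegD] at hle
    have hN1 : 1 ≤ ∑ j, a j :=
      le_trans (ha1 ⟨0, hn⟩)
        (Finset.single_le_sum (fun i _ => Nat.zero_le _) (Finset.mem_univ (⟨0, hn⟩ : Fin n)))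
    omega
  -- evaluate at s
  have hkey : T = eval s S1 + eval s S2 := by
    have h := congrArg (eval s) hG0
    rw [hG] at hG0
    have h2 := congrArg (eval s) hG0
    rw [eval_sub, eval_sub, eval_C, eval_zero] at h2
    linear_combination h2
  have hDps : ∀ i, eval s (Dp i) = ∏ j ∈ univ.erase i, (s - t j) ^ a j := by
    intro i; simp [hDp, hP, eval_prod]
  have hDs : (∏ i, (s - t i) ^ a i) ≠ 0 :=
    Finset.prod_ne_zero_iff.mpr fun i _ => pow_ne_zero _ (hste i)
  have hLHS : ∏ i, (t i / (s - t i)) ^ a i = T / ∏ i, (s - t i) ^ a i := by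
    rw [hT, ← Finset.prod_div_distrib]
    exact Finset.prod_congr rfl fun i _ => div_pow _ _ _
  rw [hLHS, hkey, hS1e, hS2e, div_eq_iff hDs, add_mul, Finset.sum_mul, Finset.sum_mul]
  congr 1
  · refine Finset.sum_congr rfl fun i hi => ?_
    have hai : a i = 1 := by rw [hI1, Finset.mem_filter] at hi; exact hi.2
    rw [hDps i]
    rw [show (∏ j ∈ univ.erase i, (t j / (t i - t j)) ^ a j) = c i from by rw [hc]]
    rw [show (∏ j, (s - t j) ^ a j) = (s - t i) * ∏ j ∈ univ.erase i, (s - t j) ^ a j from by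
      rw [← Finset.mul_prod_erase _ _ (Finset.mem_univ i), hai, pow_one]]
    have h := hste i
    field_simp
  · refine Finset.sum_congr rfl fun i hi => ?_
    have hai : a i = 2 := by rw [hI2, Finset.mem_filter] at hi; exact hi.2
    rw [hDps i]
    rw [show (∏ j ∈ univ.erase i, (t j / (t i - t j)) ^ a j) = c i from by rw [hc]]
    rw [show (∑ j ∈ univ.erase i, (a j : ℂ) * t i / (t j - t i)) = σ i from by rw [hσ]]
    rw [show (∏ j, (s - t j) ^ a j)
        = (s - t i) ^ 2 * ∏ j ∈ univ.erase i, (s - t j) ^ a j from by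
      rw [← Finset.mul_prod_erase _ _ (Finset.mem_univ i), hai]]
    have h := hste i
    field_simp
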